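/- Let F be a Ore forest-skein category, G = Frac(F,1) ⊆ G^T its T-version, and X the set of classes [t,j] of pairs (tree t, leaf index j) modulo (t,j) ~ (t∘f, j^f) where j^f is the index of the first leaf of the j-th tree of f among the leaves of t∘f. Then the relation [t,j] ⪯ [t',j'] defined by choosing forests f, f' with t∘f = t'∘f' and requiring j^f ≤ j'^{f'} is a well-defined total order on X, independent of the choice of f, f'. -/

import Mathlib

namespace ForestSkein

/-- A coloured finite rooted planar binary tree with colours in `S`. -/
inductive CTree (S : Type) : Type
  | leaf : CTree S
  | node : S → CTree S → CTree S → CTree S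

namespace CTree

/-- Number of leaves of a coloured binary tree. -/
def leaves {S : Type} : CTree S → ℕ
  | .leaf => 1
  | .node _ l r => leaves l + leaves r

/-- Graft a list of trees onto the leaves of a tree (vertical stacking). -/
def graft {S : Type} : CTree S → List (CTree S) → CTree S
  | .leaf, gs => gs.headD .leaf
  | .node c l r, gs => .node c (graft l (gs.take (leaves l))) (graft r (gs.drop (leaves l)))

/-- Relabel the colours of a tree along a map of colour sets. -/
def recolour {S S' : Type} (c : S → S') : CTree S → CTree S'
  | .leaf => .leaf
  | .node x l r => .node (c x) (recolour c l) (recolour c r)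

end CTree

/-- A coloured forest: a finite list of coloured binary trees.  Its roots are the
entries of the list, its leaves are the leaves of its trees. -/
abbrev Forest (S : Type) := List (CTree S)

/-- Total number of leaves of a forest. -/
def Forest.leaves {S : Type} (f : Forest S) : ℕ := (f.map CTree.leaves).sum

/-- Composition of forests: `Forest.comp f g` stacks `g` on top of `f`, attaching
the `j`-th root of `g` to the `j`-th leaf of `f` (meaningful when
`Forest.leaves f = g.length`). -/
def Forest.comp {S : Type} : Forest S → Forest S → Forest S
  | [], _ => []
  | t :: ts, g =>
      CTree.graft t (g.take (CTree.leaves t)) :: Forest.comp ts (g.drop (CTree.leaves t))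

/-- The elementary forest `a_{j,n}` (1-indexed) with `n` roots, a single `a`-coloured
caret at the `j`-th root, and all other trees trivial. -/
def elemForest {S : Type} (a : S) (j n : ℕ) : Forest S :=
  List.replicate (j - 1) CTree.leaf ++ [CTree.node a CTree.leaf CTree.leaf] ++
    List.replicate (n - j) CTree.leaf

/-- A set of skein relations consists of pairs of trees with equal numbers of leaves. -/
def LeafPres {S : Type} (R : CTree S → CTree S → Prop) : Prop :=
  ∀ t t' : CTree S, R t t' → CTree.leaves t = CTree.leaves t'

/-- The equivalence relation on coloured forests generated by a set `R` of skein
relations (pairs of trees), closed under composition and tensor product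
(horizontal juxtaposition).  The quotient is the forest-skein category
presented by `R`. -/
inductive SkeinEquiv {S : Type} (R : CTree S → CTree S → Prop) : Forest S → Forest S → Prop
  | of {t t' : CTree S} : R t t' → SkeinEquiv R [t] [t']
  | refl (f : Forest S) : SkeinEquiv R f f
  | symm {f g : Forest S} : SkeinEquiv R f g → SkeinEquiv R g f
  | trans {f g h : Forest S} : SkeinEquiv R f g → SkeinEquiv R g h → SkeinEquiv R f h
  | comp {f f' g g' : Forest S} :
      SkeinEquiv R f f' → SkeinEquiv R g g' → SkeinEquiv R (Forest.comp f g) (Forest.comp f' g')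
  | tensor {f f' g g' : Forest S} :
      SkeinEquiv R f f' → SkeinEquiv R g g' → SkeinEquiv R (f ++ g) (f' ++ g')

/-- Left-cancellativity of a forest-skein category given by the equivalence `E` on
forests: `f ∘ g = f ∘ h` implies `g = h`. -/
def LeftCancel {S : Type} (E : Forest S → Forest S → Prop) : Prop :=
  ∀ f g h : Forest S, Forest.leaves f = g.length → Forest.leaves f = h.length →
    E (Forest.comp f g) (Forest.comp f h) → E g h

/-- Ore's property for the forest-skein category given by the equivalence `E`:
any two forests with the same number of roots admit a common right multiple. -/
def OreProp {S : Type} (E : Forest S → Forest S → Prop) : Prop :=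
  ∀ f g : Forest S, f.length = g.length →
    ∃ p q : Forest S, Forest.leaves f = p.length ∧ Forest.leaves g = q.length ∧
      E (Forest.comp f p) (Forest.comp g q)

/-- Equality of the fractions `t ∘ s⁻¹` and `t' ∘ s'⁻¹` in the fraction group:
there are forests `f, f'` with `t ∘ f = t' ∘ f'` and `s ∘ f = s' ∘ f'` modulo `E`. -/
def FracRel {S : Type} (E : Forest S → Forest S → Prop) (t s t' s' : CTree S) : Prop :=
  ∃ f f' : Forest S, CTree.leaves t = f.length ∧ CTree.leaves t' = f'.length ∧
    E [CTree.graft t f] [CTree.graft t' f'] ∧ E [CTree.graft s f] [CTree.graft s' f']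

/-- `leafPos f j` is the (0-indexed) index `j^f` of the first leaf of the `j`-th tree
of the forest `f` among all leaves of `f`. -/
def leafPos {S : Type} (f : Forest S) (j : ℕ) : ℕ := Forest.leaves (f.take j)

/-- Generating relation for the set `X` of marked-leaf classes `[t, j]`:
skein equivalence of the underlying trees, and growth `(t, j) ~ (t ∘ f, j^f)`. -/
inductive MLRel {S : Type} (E : Forest S → Forest S → Prop) :
    CTree S × ℕ → CTree S × ℕ → Prop
  | skein {t t' : CTree S} {j : ℕ} : E [t] [t'] → MLRel E (t, j) (t', j)
  | grow (t : CTree S) (f : Forest S) (j : ℕ) (hf : CTree.leaves t = f.length) :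
      MLRel E (t, j) (CTree.graft t f, leafPos f j)

/-- Equality of marked-leaf classes in `X`. -/
def MLEquiv {S : Type} (E : Forest S → Forest S → Prop) :
    CTree S × ℕ → CTree S × ℕ → Prop :=
  Relation.EqvGen (MLRel E)

/-- The total order `⪯` on marked leaves: `[t, j] ⪯ [t', j']` when for some pair of
forests with `t ∘ f = t' ∘ f'` (modulo `E`) one has `j^f ≤ j'^{f'}`. -/
def MLLe {S : Type} (E : Forest S → Forest S → Prop) (p q : CTree S × ℕ) : Prop :=
  ∃ f f' : Forest S, CTree.leaves p.1 = f.length ∧ CTree.leaves q.1 = f'.length ∧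
    E [CTree.graft p.1 f] [CTree.graft q.1 f'] ∧ leafPos f p.2 ≤ leafPos f' q.2


section Aux

variable {S : Type} {R : CTree S → CTree S → Prop}

lemma leaves_pos (t : CTree S) : 0 < t.leaves := by
  induction t with
  | leaf => simp [CTree.leaves]
  | node c l r ihl ihr => simp only [CTree.leaves]; omega

lemma forest_leaves_append (a b : Forest S) :
    Forest.leaves (a ++ b) = Forest.leaves a + Forest.leaves b := by
  simp [Forest.leaves]

lemma forest_leaves_cons (t : CTree S) (f : Forest S) :
    Forest.leaves (t :: f) = t.leaves + Forest.leaves f := by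
  simp [Forest.leaves]

lemma graft_take (t : CTree S) (g : Forest S) :
    CTree.graft t (g.take t.leaves) = CTree.graft t g := by
  induction t generalizing g with
  | leaf => cases g <;> simp [CTree.graft, CTree.leaves]
  | node c l r ihl ihr =>
    simp only [CTree.graft, CTree.leaves, List.take_take, List.drop_take]
    rw [Nat.min_def]
    simp only [Nat.le_add_right, if_true, Nat.add_sub_cancel_left]
    rw [ihr]

lemma leaves_graft (t : CTree S) (g : Forest S) :
    (CTree.graft t g).leaves =
      Forest.leaves (g.take t.leaves) + (t.leaves - (g.take t.leaves).length) := by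
  induction t generalizing g with
  | leaf => cases g <;> simp [CTree.graft, CTree.leaves, Forest.leaves]
  | node c l r ihl ihr =>
    simp only [CTree.graft, CTree.leaves]
    rw [ihl, ihr]
    have h1 : g.take (l.leaves + r.leaves)
        = g.take l.leaves ++ (g.drop l.leaves).take r.leaves := List.take_add
    have h2 : (g.take l.leaves).take l.leaves = g.take l.leaves := by
      rw [List.take_take, Nat.min_self]
    rw [h2, h1, forest_leaves_append, List.length_append]
    have b1 : (g.take l.leaves).length ≤ l.leaves := by simp
    have b2 : ((g.drop l.leaves).take r.leaves).length ≤ r.leaves := by simp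
    omega

lemma leaves_graft_eq {t : CTree S} {g : Forest S} (h : t.leaves = g.length) :
    (CTree.graft t g).leaves = Forest.leaves g := by
  rw [leaves_graft, h, List.take_length]
  omega

lemma comp_length (f g : Forest S) : (Forest.comp f g).length = f.length := by
  induction f generalizing g with
  | nil => simp [Forest.comp]
  | cons t ts ih => simp [Forest.comp, ih]

lemma comp_single (t : CTree S) (g : Forest S) :
    Forest.comp [t] g = [CTree.graft t g] := by
  simp [Forest.comp, graft_take]

lemma comp_append (a b g : Forest S) :
    Forest.comp (a ++ b) g =
      Forest.comp a (g.take (Forest.leaves a)) ++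
        Forest.comp b (g.drop (Forest.leaves a)) := by
  induction a generalizing g with
  | nil => simp [Forest.comp, Forest.leaves]
  | cons t ts ih =>
    have e1 : (g.take (t.leaves + Forest.leaves ts)).take t.leaves = g.take t.leaves := by
      rw [List.take_take]; congr 1; omega
    have e2 : (g.take (t.leaves + Forest.leaves ts)).drop t.leaves
        = (g.drop t.leaves).take (Forest.leaves ts) := by
      rw [List.drop_take]; congr 1; omega
    have e3 : g.drop (t.leaves + Forest.leaves ts)
        = (g.drop t.leaves).drop (Forest.leaves ts) := by
      rw [List.drop_drop]
    show CTree.graft t (g.take t.leaves) :: Forest.comp (ts ++ b) (g.drop t.leaves)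
        = Forest.comp (t :: ts) (g.take (Forest.leaves (t :: ts))) ++
          Forest.comp b (g.drop (Forest.leaves (t :: ts)))
    rw [forest_leaves_cons, ih]
    show _ = (CTree.graft t ((g.take (t.leaves + Forest.leaves ts)).take t.leaves) ::
        Forest.comp ts ((g.take (t.leaves + Forest.leaves ts)).drop t.leaves)) ++
        Forest.comp b (g.drop (t.leaves + Forest.leaves ts))
    rw [e1, e2, e3, List.cons_append]

lemma graft_comp {t : CTree S} {f : Forest S} (g : Forest S) (h : t.leaves = f.length) :
    CTree.graft (CTree.graft t f) g = CTree.graft t (Forest.comp f g) := by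
  induction t generalizing f g with
  | leaf =>
    match f, h with
    | [s], _ => simp [CTree.graft, comp_single]
  | node c l r ihl ihr =>
    simp only [CTree.leaves] at h
    have hl1 : l.leaves = (f.take l.leaves).length := by
      rw [List.length_take]; omega
    have hl2 : r.leaves = (f.drop l.leaves).length := by
      rw [List.length_drop]; omega
    have hsplit : Forest.comp f g
        = Forest.comp (f.take l.leaves) (g.take (Forest.leaves (f.take l.leaves))) ++
          Forest.comp (f.drop l.leaves) (g.drop (Forest.leaves (f.take l.leaves))) := by
      conv_lhs => rw [← List.take_append_drop l.leaves f]
      exact comp_append _ _ _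
    have hL : (CTree.graft l (f.take l.leaves)).leaves = Forest.leaves (f.take l.leaves) :=
      leaves_graft_eq hl1
    show CTree.graft (CTree.node c (CTree.graft l (f.take l.leaves))
        (CTree.graft r (f.drop l.leaves))) g = _
    rw [show CTree.graft (CTree.node c (CTree.graft l (f.take l.leaves))
        (CTree.graft r (f.drop l.leaves))) g
      = CTree.node c
          (CTree.graft (CTree.graft l (f.take l.leaves))
            (g.take (CTree.graft l (f.take l.leaves)).leaves))
          (CTree.graft (CTree.graft r (f.drop l.leaves))
            (g.drop (CTree.graft l (f.take l.leaves)).leaves)) from rfl]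
    rw [hL, ihl _ hl1, ihr _ hl2]
    show _ = CTree.node c (CTree.graft l ((Forest.comp f g).take l.leaves))
      (CTree.graft r ((Forest.comp f g).drop l.leaves))
    rw [hsplit,
      List.take_left' (by rw [comp_length, ← hl1]),
      List.drop_left' (by rw [comp_length, ← hl1])]

lemma leafPos_def (f : Forest S) (j : ℕ) : leafPos f j = Forest.leaves (f.take j) := rfl

lemma leafPos_zero (f : Forest S) : leafPos f 0 = 0 := by
  simp [leafPos, Forest.leaves]

lemma leafPos_cons (t : CTree S) (ts : Forest S) (j : ℕ) :
    leafPos (t :: ts) (j + 1) = t.leaves + leafPos ts j := by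
  simp [leafPos, forest_leaves_cons]

lemma leafPos_mono {f : Forest S} {j j' : ℕ} (h : j ≤ j') :
    leafPos f j ≤ leafPos f j' := by
  have he : f.take j' = f.take j ++ (f.drop j).take (j' - j) := by
    rw [← List.take_add]; congr 1; omega
  rw [leafPos_def, leafPos_def, he, forest_leaves_append]
  omega

lemma leafPos_of_ge {f : Forest S} {j : ℕ} (h : f.length ≤ j) :
    leafPos f j = Forest.leaves f := by
  rw [leafPos_def, List.take_of_length_le h]

lemma leafPos_strict {f : Forest S} {j j' : ℕ} (h : j < j') (hf : j < f.length) :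
    leafPos f j < leafPos f j' := by
  have h1 : leafPos f (j + 1) ≤ leafPos f j' := leafPos_mono h
  have hx : Forest.leaves ((some f[j]).toList) = f[j].leaves := by simp [Forest.leaves]
  have h2 : leafPos f j < leafPos f (j + 1) := by
    rw [leafPos_def, leafPos_def, List.take_succ, List.getElem?_eq_getElem hf,
      forest_leaves_append, hx]
    have := leaves_pos f[j]
    omega
  omega

lemma leafPos_lt_leaves {f : Forest S} {j : ℕ} (hf : j < f.length) :
    leafPos f j < Forest.leaves f := by
  have := leafPos_strict hf hf
  rwa [leafPos_of_ge le_rfl] at this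

lemma leafPos_le_inv {f : Forest S} {a b : ℕ} (h : leafPos f a ≤ leafPos f b)
    (hb : b < f.length) : a ≤ b := by
  by_contra hc
  push_neg at hc
  exact absurd h (Nat.not_le.mpr (leafPos_strict hc hb))

lemma leafPos_comp {f g : Forest S} (h : Forest.leaves f = g.length) (j : ℕ) :
    leafPos (Forest.comp f g) j = leafPos g (leafPos f j) := by
  induction f generalizing g j with
  | nil => simp [Forest.comp, leafPos, Forest.leaves]
  | cons t ts ih =>
    cases j with
    | zero => simp [leafPos_zero]
    | succ j =>
      rw [forest_leaves_cons] at h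
      have hTake : t.leaves = (g.take t.leaves).length := by
        rw [List.length_take]; omega
      have h' : Forest.leaves ts = (g.drop t.leaves).length := by
        rw [List.length_drop]; omega
      rw [show Forest.comp (t :: ts) g
        = CTree.graft t (g.take t.leaves) :: Forest.comp ts (g.drop t.leaves) from rfl]
      rw [leafPos_cons, leafPos_cons, ih h', leaves_graft_eq hTake]
      rw [leafPos_def g, List.take_add, forest_leaves_append, leafPos_def]

def compLv : List ℕ → List ℕ → List ℕ
  | [], _ => []
  | a :: as, bs => ((bs.take a).sum + (a - (bs.take a).length)) :: compLv as (bs.drop a)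

lemma map_leaves_comp (f g : Forest S) :
    (Forest.comp f g).map CTree.leaves = compLv (f.map CTree.leaves) (g.map CTree.leaves) := by
  induction f generalizing g with
  | nil => simp [Forest.comp, compLv]
  | cons t ts ih =>
    show (CTree.graft t (g.take t.leaves)).leaves :: (Forest.comp ts (g.drop t.leaves)).map _
      = _
    rw [show compLv ((t :: ts).map CTree.leaves) (g.map CTree.leaves)
      = (((g.map CTree.leaves).take t.leaves).sum +
          (t.leaves - ((g.map CTree.leaves).take t.leaves).length)) ::
        compLv (ts.map CTree.leaves) ((g.map CTree.leaves).drop t.leaves) from rfl]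
    congr 1
    · rw [leaves_graft, List.take_take, Nat.min_self, ← List.map_take]
      simp [Forest.leaves]
    · rw [ih, ← List.map_drop]

lemma skein_mapLeaves (hR : LeafPres R) {f g : Forest S}
    (h : SkeinEquiv R f g) : f.map CTree.leaves = g.map CTree.leaves := by
  induction h with
  | of h => simp [hR _ _ h]
  | refl f => rfl
  | symm _ ih => exact ih.symm
  | trans _ _ ih1 ih2 => exact ih1.trans ih2
  | comp _ _ ih1 ih2 => rw [map_leaves_comp, map_leaves_comp, ih1, ih2]
  | tensor _ _ ih1 ih2 => rw [List.map_append, List.map_append, ih1, ih2]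

lemma skein_treeLeaves (hR : LeafPres R) {t t' : CTree S}
    (h : SkeinEquiv R [t] [t']) : t.leaves = t'.leaves := by
  have := skein_mapLeaves hR h
  simpa using this

lemma skein_leafPos (hR : LeafPres R) {f g : Forest S} (h : SkeinEquiv R f g) (j : ℕ) :
    leafPos f j = leafPos g j := by
  rw [leafPos_def, leafPos_def]
  show (List.map CTree.leaves (f.take j)).sum = (List.map CTree.leaves (g.take j)).sum
  rw [List.map_take, List.map_take, skein_mapLeaves hR h]

lemma forests_leaves_eq (hR : LeafPres R) {t t' : CTree S} {f f' : Forest S}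
    (hf : t.leaves = f.length) (hf' : t'.leaves = f'.length)
    (h : SkeinEquiv R [CTree.graft t f] [CTree.graft t' f']) :
    Forest.leaves f = Forest.leaves f' := by
  have := skein_treeLeaves hR h
  rwa [leaves_graft_eq hf, leaves_graft_eq hf'] at this

lemma skein_graft_left {t t' : CTree S} (h : SkeinEquiv R [t] [t']) (g : Forest S) :
    SkeinEquiv R [CTree.graft t g] [CTree.graft t' g] := by
  have := SkeinEquiv.comp h (SkeinEquiv.refl g)
  rwa [comp_single, comp_single] at this

lemma skein_graft_right {t : CTree S} {g g' : Forest S} (h : SkeinEquiv R g g') :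
    SkeinEquiv R [CTree.graft t g] [CTree.graft t g'] := by
  have := SkeinEquiv.comp (SkeinEquiv.refl [t]) h
  rwa [comp_single, comp_single] at this

lemma skein_cancel (hLC : LeftCancel (SkeinEquiv R)) {t : CTree S} {g g' : Forest S}
    (h1 : t.leaves = g.length) (h2 : t.leaves = g'.length)
    (h : SkeinEquiv R [CTree.graft t g] [CTree.graft t g']) : SkeinEquiv R g g' := by
  apply hLC [t] g g'
  · simpa [Forest.leaves] using h1
  · simpa [Forest.leaves] using h2
  · rwa [comp_single, comp_single]

lemma wd (hR : LeafPres R) (hLC : LeftCancel (SkeinEquiv R)) (hOre : OreProp (SkeinEquiv R))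
    {t t' : CTree S} {j j' : ℕ} (hj' : j' < t'.leaves)
    {f f' g g' : Forest S}
    (hf : t.leaves = f.length) (hf' : t'.leaves = f'.length)
    (hg : t.leaves = g.length) (hg' : t'.leaves = g'.length)
    (hEf : SkeinEquiv R [CTree.graft t f] [CTree.graft t' f'])
    (hEg : SkeinEquiv R [CTree.graft t g] [CTree.graft t' g'])
    (hle : leafPos f j ≤ leafPos f' j') : leafPos g j ≤ leafPos g' j' := by
  obtain ⟨u, v, hu, hv, hE⟩ := hOre f g (by rw [← hf, ← hg])
  have Lff' : Forest.leaves f = Forest.leaves f' := forests_leaves_eq hR hf hf' hEf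
  have Lgg' : Forest.leaves g = Forest.leaves g' := forests_leaves_eq hR hg hg' hEg
  have a1 := skein_graft_left (SkeinEquiv.symm hEf) u
  rw [graft_comp u hf, graft_comp u hf'] at a1
  have a2 := skein_graft_left hEg v
  rw [graft_comp v hg, graft_comp v hg'] at a2
  have a3 : SkeinEquiv R [CTree.graft t (Forest.comp f u)] [CTree.graft t (Forest.comp g v)] :=
    skein_graft_right hE
  have e1 := a1.trans (a3.trans a2)
  have ecan : SkeinEquiv R (Forest.comp f' u) (Forest.comp g' v) := by
    apply skein_cancel hLC ?_ ?_ e1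
    · rw [hf', comp_length]
    · rw [hg', comp_length]
  have keyf : leafPos u (leafPos f j) = leafPos v (leafPos g j) := by
    rw [← leafPos_comp hu, ← leafPos_comp hv, skein_leafPos hR hE]
  have keyf' : leafPos u (leafPos f' j') = leafPos v (leafPos g' j') := by
    rw [← leafPos_comp (Lff'.symm.trans hu), ← leafPos_comp (Lgg'.symm.trans hv),
      skein_leafPos hR ecan]
  have mono : leafPos u (leafPos f j) ≤ leafPos u (leafPos f' j') := leafPos_mono hle
  have hlt : leafPos g' j' < v.length := by
    rw [← (Lgg'.symm.trans hv)]
    exact leafPos_lt_leaves (by rw [← hg']; exact hj')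
  exact leafPos_le_inv (by omega) hlt

lemma mlle_congr_left (hR : LeafPres R) (hOre : OreProp (SkeinEquiv R))
    {a b : CTree S × ℕ} (hab : MLRel (SkeinEquiv R) a b) (q : CTree S × ℕ) :
    MLLe (SkeinEquiv R) a q ↔ MLLe (SkeinEquiv R) b q := by
  unfold MLLe
  cases hab with
  | @skein t t' j h =>
    have hl : t.leaves = t'.leaves := skein_treeLeaves hR h
    constructor
    · rintro ⟨f, f', h1, h2, h3, h4⟩
      exact ⟨f, f', hl ▸ h1, h2, (skein_graft_left h.symm f).trans h3, h4⟩
    · rintro ⟨f, f', h1, h2, h3, h4⟩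
      exact ⟨f, f', hl ▸ h1, h2, (skein_graft_left h f).trans h3, h4⟩
  | grow t f j hf =>
    constructor
    · rintro ⟨g, g', h1, h2, h3, h4⟩
      have h1' : t.leaves = g.length := h1
      have h3' : SkeinEquiv R [CTree.graft t g] [CTree.graft q.1 g'] := h3
      have h4' : leafPos g j ≤ leafPos g' q.2 := h4
      obtain ⟨u, v, hu, hv, hE⟩ := hOre f g (by rw [← hf, ← h1'])
      have hg'v : Forest.leaves g' = v.length :=
        (forests_leaves_eq hR h1' h2 h3').symm.trans hv
      refine ⟨u, Forest.comp g' v, ?_, ?_, ?_, ?_⟩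
      · show (CTree.graft t f).leaves = u.length
        rw [leaves_graft_eq hf]; exact hu
      · rw [comp_length]; exact h2
      · show SkeinEquiv R [CTree.graft (CTree.graft t f) u]
          [CTree.graft q.1 (Forest.comp g' v)]
        have a1 : SkeinEquiv R [CTree.graft (CTree.graft t f) u]
            [CTree.graft t (Forest.comp g v)] := by
          rw [graft_comp u hf]
          exact skein_graft_right hE
        rw [← graft_comp v h1'] at a1
        have a2 := skein_graft_left h3' v
        rw [graft_comp v h2] at a2
        exact a1.trans a2
      · show leafPos u (leafPos f j) ≤ leafPos (Forest.comp g' v) q.2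
        rw [leafPos_comp hg'v]
        calc leafPos u (leafPos f j) = leafPos (Forest.comp f u) j := (leafPos_comp hu j).symm
          _ = leafPos (Forest.comp g v) j := skein_leafPos hR hE j
          _ = leafPos v (leafPos g j) := leafPos_comp hv j
          _ ≤ leafPos v (leafPos g' q.2) := leafPos_mono h4'
    · rintro ⟨F1, F2, h1, h2, h3, h4⟩
      have h1' : (CTree.graft t f).leaves = F1.length := h1
      have h3' : SkeinEquiv R [CTree.graft (CTree.graft t f) F1] [CTree.graft q.1 F2] := h3
      have h4' : leafPos F1 (leafPos f j) ≤ leafPos F2 q.2 := h4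
      have hF1 : Forest.leaves f = F1.length := by
        rw [← leaves_graft_eq hf]; exact h1'
      refine ⟨Forest.comp f F1, F2, ?_, h2, ?_, ?_⟩
      · show t.leaves = (Forest.comp f F1).length
        rw [comp_length]; exact hf
      · show SkeinEquiv R [CTree.graft t (Forest.comp f F1)] [CTree.graft q.1 F2]
        rw [← graft_comp F1 hf]; exact h3'
      · show leafPos (Forest.comp f F1) j ≤ leafPos F2 q.2
        rw [leafPos_comp hF1]; exact h4'

lemma mlle_congr_right (hR : LeafPres R) (hOre : OreProp (SkeinEquiv R))
    {a b : CTree S × ℕ} (hab : MLRel (SkeinEquiv R) a b) (q : CTree S × ℕ) :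
    MLLe (SkeinEquiv R) q a ↔ MLLe (SkeinEquiv R) q b := by
  unfold MLLe
  cases hab with
  | @skein t t' j h =>
    have hl : t.leaves = t'.leaves := skein_treeLeaves hR h
    constructor
    · rintro ⟨f, f', h1, h2, h3, h4⟩
      exact ⟨f, f', h1, hl ▸ h2, h3.trans (skein_graft_left h f'), h4⟩
    · rintro ⟨f, f', h1, h2, h3, h4⟩
      exact ⟨f, f', h1, hl ▸ h2, h3.trans (skein_graft_left h.symm f'), h4⟩
  | grow t f j hf =>
    constructor
    · rintro ⟨g, g', h1, h2, h3, h4⟩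
      have h2' : t.leaves = g'.length := h2
      have h3' : SkeinEquiv R [CTree.graft q.1 g] [CTree.graft t g'] := h3
      have h4' : leafPos g q.2 ≤ leafPos g' j := h4
      obtain ⟨u, v, hu, hv, hE⟩ := hOre f g' (by rw [← hf, ← h2'])
      have hgv : Forest.leaves g = v.length :=
        (forests_leaves_eq hR h1 h2' h3').trans hv
      refine ⟨Forest.comp g v, u, ?_, ?_, ?_, ?_⟩
      · show q.1.leaves = (Forest.comp g v).length
        rw [comp_length]; exact h1
      · show (CTree.graft t f).leaves = u.length
        rw [leaves_graft_eq hf]; exact hu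
      · show SkeinEquiv R [CTree.graft q.1 (Forest.comp g v)]
          [CTree.graft (CTree.graft t f) u]
        have a1 := skein_graft_left h3' v
        rw [graft_comp v h1, graft_comp v h2'] at a1
        have a2 : SkeinEquiv R [CTree.graft t (Forest.comp g' v)]
            [CTree.graft t (Forest.comp f u)] := skein_graft_right hE.symm
        rw [← graft_comp u hf] at a2
        exact a1.trans a2
      · show leafPos (Forest.comp g v) q.2 ≤ leafPos u (leafPos f j)
        rw [leafPos_comp hgv]
        calc leafPos v (leafPos g q.2) ≤ leafPos v (leafPos g' j) := leafPos_mono h4'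
          _ = leafPos (Forest.comp g' v) j := (leafPos_comp hv j).symm
          _ = leafPos (Forest.comp f u) j := (skein_leafPos hR hE j).symm
          _ = leafPos u (leafPos f j) := leafPos_comp hu j
    · rintro ⟨F1, F2, h1, h2, h3, h4⟩
      have h2' : (CTree.graft t f).leaves = F2.length := h2
      have h3' : SkeinEquiv R [CTree.graft q.1 F1] [CTree.graft (CTree.graft t f) F2] := h3
      have h4' : leafPos F1 q.2 ≤ leafPos F2 (leafPos f j) := h4
      have hF2 : Forest.leaves f = F2.length := by
        rw [← leaves_graft_eq hf]; exact h2'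
      refine ⟨F1, Forest.comp f F2, h1, ?_, ?_, ?_⟩
      · show t.leaves = (Forest.comp f F2).length
        rw [comp_length]; exact hf
      · show SkeinEquiv R [CTree.graft q.1 F1] [CTree.graft t (Forest.comp f F2)]
        rw [← graft_comp F2 hf]; exact h3'
      · show leafPos F1 q.2 ≤ leafPos (Forest.comp f F2) j
        rw [leafPos_comp hF2]; exact h4'

lemma mlle_congr_left_equiv (hR : LeafPres R) (hOre : OreProp (SkeinEquiv R))
    {a b : CTree S × ℕ} (h : MLEquiv (SkeinEquiv R) a b) (q : CTree S × ℕ) :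
    MLLe (SkeinEquiv R) a q ↔ MLLe (SkeinEquiv R) b q := by
  have h' : Relation.EqvGen (MLRel (SkeinEquiv R)) a b := h
  clear h
  induction h' with
  | rel x y hxy => exact mlle_congr_left hR hOre hxy q
  | refl x => exact Iff.rfl
  | symm x y _ ih => exact ih.symm
  | trans x y z _ _ ih1 ih2 => exact ih1.trans ih2

lemma mlle_congr_right_equiv (hR : LeafPres R) (hOre : OreProp (SkeinEquiv R))
    {a b : CTree S × ℕ} (h : MLEquiv (SkeinEquiv R) a b) (q : CTree S × ℕ) :
    MLLe (SkeinEquiv R) q a ↔ MLLe (SkeinEquiv R) q b := by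
  have h' : Relation.EqvGen (MLRel (SkeinEquiv R)) a b := h
  clear h
  induction h' with
  | rel x y hxy => exact mlle_congr_right hR hOre hxy q
  | refl x => exact Iff.rfl
  | symm x y _ ih => exact ih.symm
  | trans x y z _ _ ih1 ih2 => exact ih1.trans ih2

lemma mlle_trans (hR : LeafPres R) (hOre : OreProp (SkeinEquiv R))
    {p q r : CTree S × ℕ} (h1 : MLLe (SkeinEquiv R) p q) (h2 : MLLe (SkeinEquiv R) q r) :
    MLLe (SkeinEquiv R) p r := by
  obtain ⟨f, f', hf, hf', hEf, hlef⟩ := h1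
  obtain ⟨g, g', hg, hg', hEg, hleg⟩ := h2
  obtain ⟨u, v, hu, hv, hE⟩ := hOre f' g (by rw [← hf', ← hg])
  have hfu : Forest.leaves f = u.length := (forests_leaves_eq hR hf hf' hEf).trans hu
  have hgv : Forest.leaves g' = v.length := (forests_leaves_eq hR hg hg' hEg).symm.trans hv
  refine ⟨Forest.comp f u, Forest.comp g' v, by rw [comp_length]; exact hf,
    by rw [comp_length]; exact hg', ?_, ?_⟩
  · have a1 : SkeinEquiv R [CTree.graft p.1 (Forest.comp f u)]
        [CTree.graft q.1 (Forest.comp f' u)] := by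
      rw [← graft_comp u hf, ← graft_comp u hf']; exact skein_graft_left hEf u
    have a2 : SkeinEquiv R [CTree.graft q.1 (Forest.comp f' u)]
        [CTree.graft q.1 (Forest.comp g v)] := skein_graft_right hE
    have a3 : SkeinEquiv R [CTree.graft q.1 (Forest.comp g v)]
        [CTree.graft r.1 (Forest.comp g' v)] := by
      rw [← graft_comp v hg, ← graft_comp v hg']; exact skein_graft_left hEg v
    exact a1.trans (a2.trans a3)
  · rw [leafPos_comp hfu, leafPos_comp hgv]
    calc leafPos u (leafPos f p.2) ≤ leafPos u (leafPos f' q.2) := leafPos_mono hlef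
      _ = leafPos (Forest.comp f' u) q.2 := (leafPos_comp hu _).symm
      _ = leafPos (Forest.comp g v) q.2 := skein_leafPos hR hE _
      _ = leafPos v (leafPos g q.2) := leafPos_comp hv _
      _ ≤ leafPos v (leafPos g' r.2) := leafPos_mono hleg

lemma mlle_antisymm (hR : LeafPres R) (hLC : LeftCancel (SkeinEquiv R))
    (hOre : OreProp (SkeinEquiv R)) {p q : CTree S × ℕ}
    (h1 : MLLe (SkeinEquiv R) p q) (h2 : MLLe (SkeinEquiv R) q p) :
    MLEquiv (SkeinEquiv R) p q := by
  obtain ⟨t1, j1⟩ := p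
  obtain ⟨t2, j2⟩ := q
  obtain ⟨f, f', hf, hf', hEf, hlef⟩ := h1
  obtain ⟨g, g', hg, hg', hEg, hleg⟩ := h2
  simp only at hf hf' hg hg' hEf hEg hlef hleg
  obtain ⟨u, v, hu, hv, hE⟩ := hOre f g' (by rw [← hf, ← hg'])
  have hfu' : Forest.leaves f' = u.length := (forests_leaves_eq hR hf hf' hEf).symm.trans hu
  have hgv : Forest.leaves g = v.length := (forests_leaves_eq hR hg hg' hEg).trans hv
  have eF : SkeinEquiv R [CTree.graft t1 (Forest.comp f u)]
      [CTree.graft t2 (Forest.comp f' u)] := by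
    rw [← graft_comp u hf, ← graft_comp u hf']; exact skein_graft_left hEf u
  have eG : SkeinEquiv R [CTree.graft t2 (Forest.comp g v)]
      [CTree.graft t1 (Forest.comp g' v)] := by
    rw [← graft_comp v hg, ← graft_comp v hg']; exact skein_graft_left hEg v
  have ePP : SkeinEquiv R [CTree.graft t1 (Forest.comp f u)]
      [CTree.graft t1 (Forest.comp g' v)] := skein_graft_right hE
  have eQQ : SkeinEquiv R [CTree.graft t2 (Forest.comp f' u)]
      [CTree.graft t2 (Forest.comp g v)] := eF.symm.trans (ePP.trans eG.symm)
  have cQ : SkeinEquiv R (Forest.comp f' u) (Forest.comp g v) := by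
    apply skein_cancel hLC ?_ ?_ eQQ
    · rw [hf', comp_length]
    · rw [hg, comp_length]
  have i1 : leafPos (Forest.comp f u) j1 ≤ leafPos (Forest.comp f' u) j2 := by
    rw [leafPos_comp hu, leafPos_comp hfu']
    exact leafPos_mono hlef
  have i2 : leafPos (Forest.comp g v) j2 ≤ leafPos (Forest.comp g' v) j1 := by
    rw [leafPos_comp hgv, leafPos_comp hv]
    exact leafPos_mono hleg
  have i3 : leafPos (Forest.comp f u) j1 = leafPos (Forest.comp g' v) j1 :=
    skein_leafPos hR hE j1
  have i4 : leafPos (Forest.comp f' u) j2 = leafPos (Forest.comp g v) j2 :=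
    skein_leafPos hR cQ j2
  have key : leafPos (Forest.comp f u) j1 = leafPos (Forest.comp f' u) j2 := by omega
  have hlen1 : t1.leaves = (Forest.comp f u).length := by rw [comp_length]; exact hf
  have hlen2 : t2.leaves = (Forest.comp f' u).length := by rw [comp_length]; exact hf'
  have e1 : MLEquiv (SkeinEquiv R) (t1, j1)
      (CTree.graft t1 (Forest.comp f u), leafPos (Forest.comp f u) j1) :=
    Relation.EqvGen.rel _ _ (MLRel.grow t1 (Forest.comp f u) j1 hlen1)
  have e2 : MLEquiv (SkeinEquiv R)
      (CTree.graft t1 (Forest.comp f u), leafPos (Forest.comp f u) j1)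
      (CTree.graft t2 (Forest.comp f' u), leafPos (Forest.comp f u) j1) :=
    Relation.EqvGen.rel _ _ (MLRel.skein eF)
  have e3 : MLEquiv (SkeinEquiv R) (t2, j2)
      (CTree.graft t2 (Forest.comp f' u), leafPos (Forest.comp f u) j1) := by
    rw [key]
    exact Relation.EqvGen.rel _ _ (MLRel.grow t2 (Forest.comp f' u) j2 hlen2)
  exact Relation.EqvGen.trans _ _ _ (Relation.EqvGen.trans _ _ _ e1 e2)
    (Relation.EqvGen.symm _ _ e3)

lemma mlle_total (hOre : OreProp (SkeinEquiv R)) (p q : CTree S × ℕ) :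
    MLLe (SkeinEquiv R) p q ∨ MLLe (SkeinEquiv R) q p := by
  obtain ⟨u, v, hu, hv, hE⟩ := hOre [p.1] [q.1] rfl
  rw [comp_single, comp_single] at hE
  simp only [Forest.leaves, List.map_cons, List.map_nil, List.sum_cons, List.sum_nil,
    Nat.add_zero] at hu hv
  rcases le_total (leafPos u p.2) (leafPos v q.2) with h | h
  · exact Or.inl ⟨u, v, hu, hv, hE, h⟩
  · exact Or.inr ⟨v, u, hv, hu, hE.symm, h⟩

end Aux


/-- the relation `[t,j] ⪯ [t',j']` (defined by `j^f ≤ j'^{f'}` for a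
common multiple `t∘f = t'∘f'`) is independent of the choice of common multiple,
descends to the set `X` of marked-leaf classes, and is a total order there. -/
theorem marked_leaf_total_order {S : Type} (R : CTree S → CTree S → Prop)
    (hR : LeafPres R)
    (hLC : LeftCancel (SkeinEquiv R)) (hOre : OreProp (SkeinEquiv R)) :
    (∀ (t t' : CTree S) (j j' : ℕ), j < CTree.leaves t → j' < CTree.leaves t' →
      ∀ f f' g g' : Forest S,
        CTree.leaves t = f.length → CTree.leaves t' = f'.length →
        CTree.leaves t = g.length → CTree.leaves t' = g'.length →
        SkeinEquiv R [CTree.graft t f] [CTree.graft t' f'] →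
        SkeinEquiv R [CTree.graft t g] [CTree.graft t' g'] →
        leafPos f j ≤ leafPos f' j' → leafPos g j ≤ leafPos g' j')
    ∧ (∀ p p' q q' : CTree S × ℕ, p.2 < CTree.leaves p.1 → p'.2 < CTree.leaves p'.1 →
        q.2 < CTree.leaves q.1 → q'.2 < CTree.leaves q'.1 →
        MLEquiv (SkeinEquiv R) p p' → MLEquiv (SkeinEquiv R) q q' →
        (MLLe (SkeinEquiv R) p q ↔ MLLe (SkeinEquiv R) p' q'))
    ∧ (∀ p : CTree S × ℕ, p.2 < CTree.leaves p.1 → MLLe (SkeinEquiv R) p p)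
    ∧ (∀ p q r : CTree S × ℕ, p.2 < CTree.leaves p.1 → q.2 < CTree.leaves q.1 →
        r.2 < CTree.leaves r.1 →
        MLLe (SkeinEquiv R) p q → MLLe (SkeinEquiv R) q r → MLLe (SkeinEquiv R) p r)
    ∧ (∀ p q : CTree S × ℕ, p.2 < CTree.leaves p.1 → q.2 < CTree.leaves q.1 →
        MLLe (SkeinEquiv R) p q → MLLe (SkeinEquiv R) q p → MLEquiv (SkeinEquiv R) p q)
    ∧ (∀ p q : CTree S × ℕ, p.2 < CTree.leaves p.1 → q.2 < CTree.leaves q.1 →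
        MLLe (SkeinEquiv R) p q ∨ MLLe (SkeinEquiv R) q p) := by
  refine ⟨?_, ?_, ?_, ?_, ?_, ?_⟩
  · intro t t' j j' hj hj' f f' g g' hf hf' hg hg' hEf hEg hle
    exact wd hR hLC hOre hj' hf hf' hg hg' hEf hEg hle
  · intro p p' q q' _ _ _ _ hpp' hqq'
    exact (mlle_congr_left_equiv hR hOre hpp' q).trans
      (mlle_congr_right_equiv hR hOre hqq' p')
  · intro p _
    exact ⟨List.replicate p.1.leaves CTree.leaf, List.replicate p.1.leaves CTree.leaf,
      by simp, by simp, SkeinEquiv.refl _, le_rfl⟩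
  · intro p q r _ _ _ h1 h2
    exact mlle_trans hR hOre h1 h2
  · intro p q _ _ h1 h2
    exact mlle_antisymm hR hLC hOre h1 h2
  · intro p q _ _
    exact mlle_total hOre p q

end ForestSkein
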